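/- Let the setting of the pH-OpInf-DEIM state error bound hold: Φ ∈ ℝⁿˣʳ with ΦᵀΦ = I_r; H(x) = (1/2)xᵀQx + cᵀh(x) with Q symmetric, ∇H(x) = Qx + J_h(x)ᵀc, ∇H and J_h Lipschitz with constants C_Lip[∇H] and C_Lip[J_h]; ℙ = Ψ(PᵀΨ)⁻¹Pᵀ with Ψ having orthonormal columns and P a selection matrix; D_r ∈ ℝʳˣʳ, B_r ∈ ℝʳˣᵐ, Q_r = ΦᵀQΦ. Let x: [0,T] → ℝⁿ be continuously differentiable, u, d continuous, and x_r: [0,T] → ℝʳ continuously differentiable with ẋ_r(t) = D_r(Q_r x_r(t) + Φᵀ J_h(Φ x_r(t))ᵀ ℙᵀ c) + B_r u(t). Define θ(t) := ΦΦᵀx(t) − Φx_r(t), ρ(t) := x(t) − ΦΦᵀx(t), ζ(t) := ẋ(t) − d(t), η(t) := Φᵀd(t) − D_rΦᵀ∇H(x(t)) − B_r u(t), ξ(t) := (I − ℙ)J_h(ΦΦᵀx(t))Φ, C₁ := μ(Φ D_r Φᵀ Q) + ‖D_rΦᵀ‖·C_Lip[J_h]·‖(PᵀΨ)⁻¹‖·‖c‖,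 C₂ := ‖D_rΦᵀ‖·C_Lip[∇H], C₃ := ‖D_r‖·‖c‖. Then at every time t where θ(t) ≠ 0, the function t ↦ ‖θ(t)‖ is differentiable and satisfies d/dt ‖θ(t)‖ ≤ C₁‖θ(t)‖ + C₂‖ρ(t)‖ + C₃‖ξ(t)‖ + ‖ζ(t)‖ + ‖η(t)‖. -/

import Mathlib

open Matrix MeasureTheory RealInnerProductSpace

noncomputable section

/-- Euclidean space `ℝⁿ`. -/
abbrev Evec (n : ℕ) := EuclideanSpace ℝ (Fin n)

/-- Matrix-vector product on Euclidean spaces. -/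
def mv {a b : ℕ} (M : Matrix (Fin a) (Fin b) ℝ) (v : Evec b) : Evec a := WithLp.toLp 2 (M.mulVec v)

/-- Spectral (operator) norm of a real matrix, viewed as a linear map between
Euclidean spaces. -/
def spec {a b : ℕ} (M : Matrix (Fin a) (Fin b) ℝ) : ℝ :=
  ‖LinearMap.toContinuousLinearMap (Matrix.toEuclideanLin M)‖

/-- Logarithmic norm `μ(A) = sup_{v ≠ 0} ⟪v, A v⟫ / ⟪v, v⟫` of a real square matrix. -/
def logNorm {a : ℕ} (A : Matrix (Fin a) (Fin a) ℝ) : ℝ :=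
  sSup {s : ℝ | ∃ v : Evec a, v ≠ 0 ∧ s = ⟪v, mv A v⟫ / ⟪v, v⟫}

lemma mv_eq_clm {a b : ℕ} (M : Matrix (Fin a) (Fin b) ℝ) (v : Evec b) :
    mv M v = (LinearMap.toContinuousLinearMap (Matrix.toEuclideanLin M)) v := rfl

lemma spec_nonneg {a b : ℕ} (M : Matrix (Fin a) (Fin b) ℝ) : 0 ≤ spec M := norm_nonneg _

lemma norm_mv_le {a b : ℕ} (M : Matrix (Fin a) (Fin b) ℝ) (v : Evec b) :
    ‖mv M v‖ ≤ spec M * ‖v‖ := by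
  rw [mv_eq_clm]; exact ContinuousLinearMap.le_opNorm _ _

lemma spec_le_of_bound {a b : ℕ} (M : Matrix (Fin a) (Fin b) ℝ) {C : ℝ} (hC : 0 ≤ C)
    (hb : ∀ v, ‖mv M v‖ ≤ C * ‖v‖) : spec M ≤ C :=
  ContinuousLinearMap.opNorm_le_bound _ hC (fun v => hb v)

lemma inner_mv {a b : ℕ} (M : Matrix (Fin a) (Fin b) ℝ) (u : Evec a) (v : Evec b) :
    ⟪u, mv M v⟫ = ⟪mv Mᵀ u, v⟫ := by
  simp only [mv, PiLp.inner_apply, RCLike.inner_apply, starRingEnd_apply, star_trivial,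
    PiLp.toLp_apply, Matrix.mulVec, dotProduct, Matrix.transpose_apply]
  simp only [Finset.mul_sum, Finset.sum_mul]
  rw [Finset.sum_comm]
  congr 1; ext i; congr 1; ext j; ring

lemma mv_mv {a b e : ℕ} (M : Matrix (Fin a) (Fin b) ℝ) (N : Matrix (Fin b) (Fin e) ℝ)
    (v : Evec e) : mv (M * N) v = mv M (mv N v) := by
  simp [mv, Matrix.mulVec_mulVec]

lemma mv_add {a b : ℕ} (M : Matrix (Fin a) (Fin b) ℝ) (v w : Evec b) :
    mv M (v + w) = mv M v + mv M w := by
  simp only [mv_eq_clm, map_add]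

lemma mv_sub {a b : ℕ} (M : Matrix (Fin a) (Fin b) ℝ) (v w : Evec b) :
    mv M (v - w) = mv M v - mv M w := by
  simp only [mv_eq_clm, map_sub]

lemma sub_mv {a b : ℕ} (M N : Matrix (Fin a) (Fin b) ℝ) (v : Evec b) :
    mv (M - N) v = mv M v - mv N v := by
  simp only [mv_eq_clm, map_sub, ContinuousLinearMap.sub_apply]

lemma spec_transpose_le {a b : ℕ} (M : Matrix (Fin a) (Fin b) ℝ) : spec Mᵀ ≤ spec M := by
  apply spec_le_of_bound _ (spec_nonneg M)
  intro v
  rcases eq_or_ne (mv Mᵀ v) 0 with h0 | h0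
  · rw [h0, norm_zero]; exact mul_nonneg (spec_nonneg M) (norm_nonneg v)
  · have h1 : ‖mv Mᵀ v‖ * ‖mv Mᵀ v‖ = ⟪mv Mᵀ v, mv Mᵀ v⟫ := (real_inner_self_eq_norm_mul_norm _).symm
    have h2 : ⟪mv Mᵀ v, mv Mᵀ v⟫ = ⟪v, mv M (mv Mᵀ v)⟫ := by
      rw [inner_mv M v (mv Mᵀ v)]
    have h3 : ⟪v, mv M (mv Mᵀ v)⟫ ≤ ‖v‖ * (spec M * ‖mv Mᵀ v‖) :=
      le_trans (real_inner_le_norm _ _) (by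
        exact mul_le_mul_of_nonneg_left (norm_mv_le M _) (norm_nonneg v))
    have h4 : ‖mv Mᵀ v‖ * ‖mv Mᵀ v‖ ≤ spec M * ‖v‖ * ‖mv Mᵀ v‖ := by
      rw [h1, h2]; nlinarith [h3]
    have := le_of_mul_le_mul_right h4 (norm_pos_iff.2 h0)
    linarith [this]

lemma mv_one {a : ℕ} (v : Evec a) : mv (1 : Matrix (Fin a) (Fin a) ℝ) v = v := by
  simp only [mv, Matrix.one_mulVec, WithLp.toLp_ofLp]

lemma norm_mv_orth {a b : ℕ} (M : Matrix (Fin a) (Fin b) ℝ) (hM : Mᵀ * M = 1)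
    (v : Evec b) : ‖mv M v‖ = ‖v‖ := by
  have h1 : ⟪mv M v, mv M v⟫ = ⟪v, v⟫ := by
    have := inner_mv M (mv M v) v
    rw [← mv_mv, hM, mv_one] at this
    rw [real_inner_comm, this]
  have h2 := real_inner_self_eq_norm_mul_norm (mv M v)
  have h3 := real_inner_self_eq_norm_mul_norm v
  nlinarith [norm_nonneg (mv M v), norm_nonneg v]

lemma spec_orth_le {a b : ℕ} (M : Matrix (Fin a) (Fin b) ℝ) (hM : Mᵀ * M = 1) :
    spec M ≤ 1 := by
  apply spec_le_of_bound _ zero_le_one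
  intro v; rw [norm_mv_orth M hM, one_mul]

lemma spec_mul_le {a b e : ℕ} (M : Matrix (Fin a) (Fin b) ℝ) (N : Matrix (Fin b) (Fin e) ℝ) :
    spec (M * N) ≤ spec M * spec N := by
  apply spec_le_of_bound _ (mul_nonneg (spec_nonneg M) (spec_nonneg N))
  intro v
  rw [mv_mv, mul_assoc]
  exact le_trans (norm_mv_le M _) (mul_le_mul_of_nonneg_left (norm_mv_le N v) (spec_nonneg M))

lemma hasDerivAt_norm_comp {N : ℕ} {f : ℝ → Evec N} {f' : Evec N} {t : ℝ}
    (hf : HasDerivAt f f' t) (h0 : f t ≠ 0) :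
    HasDerivAt (fun s => ‖f s‖) (⟪f t, f'⟫ / ‖f t‖) t := by
  have hnz : (⟪f t, f t⟫ : ℝ) ≠ 0 := by
    rw [real_inner_self_eq_norm_mul_norm]
    exact mul_ne_zero (norm_ne_zero_iff.2 h0) (norm_ne_zero_iff.2 h0)
  have hg : HasDerivAt (fun s => (⟪f s, f s⟫ : ℝ)) (⟪f t, f'⟫ + ⟪f', f t⟫) t :=
    hf.inner ℝ hf
  have hs := (Real.hasDerivAt_sqrt hnz).comp t hg
  have heq : (fun s => Real.sqrt ⟪f s, f s⟫) = fun s => ‖f s‖ := by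
    funext s
    rw [real_inner_self_eq_norm_mul_norm, Real.sqrt_mul_self (norm_nonneg _)]
  have heq2 : ((fun x => Real.sqrt x) ∘ fun s => (⟪f s, f s⟫ : ℝ)) = fun s => ‖f s‖ := by
    funext s
    simp only [Function.comp_apply]
    rw [real_inner_self_eq_norm_mul_norm, Real.sqrt_mul_self (norm_nonneg _)]
  rw [heq2] at hs
  refine hs.congr_deriv ?_
  rw [real_inner_self_eq_norm_mul_norm, Real.sqrt_mul_self (norm_nonneg _),
    real_inner_comm f' (f t)]
  have : ‖f t‖ ≠ 0 := norm_ne_zero_iff.2 h0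
  field_simp
  ring

lemma logNorm_bound {a : ℕ} (A : Matrix (Fin a) (Fin a) ℝ) (v : Evec a) (hv : v ≠ 0) :
    ⟪v, mv A v⟫ ≤ logNorm A * (‖v‖ * ‖v‖) := by
  have hvv : (⟪v, v⟫ : ℝ) = ‖v‖ * ‖v‖ := real_inner_self_eq_norm_mul_norm v
  have hpos : (0:ℝ) < ‖v‖ * ‖v‖ :=
    mul_pos (norm_pos_iff.2 hv) (norm_pos_iff.2 hv)
  have hmem : (⟪v, mv A v⟫ / ⟪v, v⟫ : ℝ) ∈
      {s : ℝ | ∃ w : Evec a, w ≠ 0 ∧ s = ⟪w, mv A w⟫ / ⟪w, w⟫} := ⟨v, hv, rfl⟩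
  have hbdd : BddAbove {s : ℝ | ∃ w : Evec a, w ≠ 0 ∧ s = ⟪w, mv A w⟫ / ⟪w, w⟫} := by
    refine ⟨spec A, ?_⟩
    rintro s ⟨w, hw, rfl⟩
    have hww : (⟪w, w⟫ : ℝ) = ‖w‖ * ‖w‖ := real_inner_self_eq_norm_mul_norm w
    have hwpos : (0:ℝ) < ‖w‖ * ‖w‖ := mul_pos (norm_pos_iff.2 hw) (norm_pos_iff.2 hw)
    have h1 : ⟪w, mv A w⟫ ≤ spec A * (‖w‖ * ‖w‖) := by
      calc ⟪w, mv A w⟫ ≤ ‖w‖ * ‖mv A w‖ := real_inner_le_norm _ _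
        _ ≤ ‖w‖ * (spec A * ‖w‖) :=
          mul_le_mul_of_nonneg_left (norm_mv_le A w) (norm_nonneg w)
        _ = spec A * (‖w‖ * ‖w‖) := by ring
    rw [hww, div_le_iff₀ hwpos]
    linarith
  have hle : (⟪v, mv A v⟫ / ⟪v, v⟫ : ℝ) ≤ logNorm A := le_csSup hbdd hmem
  rw [hvv] at hle
  rw [div_le_iff₀ hpos] at hle
  linarith

lemma selection_orth {a b : ℕ} (P : Matrix (Fin a) (Fin b) ℝ)
    (hP : ∃ ℘ : Fin b → Fin a, Function.Injective ℘ ∧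
      ∀ i j, P i j = if i = ℘ j then 1 else 0) : Pᵀ * P = 1 := by
  obtain ⟨℘, h℘, hPdef⟩ := hP
  ext j k
  simp only [Matrix.mul_apply, Matrix.transpose_apply, hPdef, Matrix.one_apply]
  rw [Finset.sum_eq_single (℘ j)]
  · simp [h℘.eq_iff, eq_comm]
  · intro i _ hi
    simp [hi]
  · intro hmem; exact absurd (Finset.mem_univ _) hmem

lemma mv_hasDerivAt {a b : ℕ} (M : Matrix (Fin a) (Fin b) ℝ) {f : ℝ → Evec b}
    {f' : Evec b} {t : ℝ} (hf : HasDerivAt f f' t) :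
    HasDerivAt (fun s => mv M (f s)) (mv M f') t := by
  exact
    ((LinearMap.toContinuousLinearMap (Matrix.toEuclideanLin M)).hasFDerivAt).comp_hasDerivAt
      t hf

set_option maxHeartbeats 1600000 in
/-- Differential inequality for the pH-OpInf-DEIM error
component `θ(t) = ΦΦᵀx(t) − Φx_r(t)`: at every time `t ∈ [0, T]` with
`θ(t) ≠ 0`, the function `t ↦ ‖θ(t)‖` is differentiable and
`d/dt ‖θ(t)‖ ≤ C₁‖θ(t)‖ + C₂‖ρ(t)‖ + C₃‖ξ(t)‖ + ‖ζ(t)‖ + ‖η(t)‖`. -/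
theorem theta_norm_derivative_bound {n r d m m0 : ℕ}
    (T : ℝ) (hT : 0 < T)
    (Φ : Matrix (Fin n) (Fin r) ℝ) (hΦ : Φᵀ * Φ = 1)
    (Q : Matrix (Fin n) (Fin n) ℝ) (hQ : Qᵀ = Q) (c : Evec d)
    (h : Evec n → Evec d) (Jh : Evec n → Matrix (Fin d) (Fin n) ℝ)
    (hJac : ∀ p, HasFDerivAt h
      (LinearMap.toContinuousLinearMap (Matrix.toEuclideanLin (Jh p))) p)
    (gH : Evec n → Evec n) (hgH : ∀ p, gH p = mv Q p + mv (Jh p)ᵀ c)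
    (CLipH : ℝ) (hLipH : ∀ a b : Evec n, ‖gH a - gH b‖ ≤ CLipH * ‖a - b‖)
    (CLipJ : ℝ) (hLipJ : ∀ a b : Evec n, spec (Jh a - Jh b) ≤ CLipJ * ‖a - b‖)
    (Ψ P : Matrix (Fin d) (Fin m0) ℝ)
    (hΨ : Ψᵀ * Ψ = 1)
    (hP : ∃ ℘ : Fin m0 → Fin d, Function.Injective ℘ ∧
      ∀ i j, P i j = if i = ℘ j then 1 else 0)
    (hPΨ : IsUnit (Pᵀ * Ψ))
    (Pbb : Matrix (Fin d) (Fin d) ℝ) (hPbb : Pbb = Ψ * (Pᵀ * Ψ)⁻¹ * Pᵀ)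
    (Dr : Matrix (Fin r) (Fin r) ℝ) (Br : Matrix (Fin r) (Fin m) ℝ)
    (Qr : Matrix (Fin r) (Fin r) ℝ) (hQrdef : Qr = Φᵀ * Q * Φ)
    (x x' : ℝ → Evec n)
    (hx : ∀ t ∈ Set.Icc (0 : ℝ) T, HasDerivAt x (x' t) t)
    (hx'c : ContinuousOn x' (Set.Icc (0 : ℝ) T))
    (u : ℝ → Evec m) (hu : ContinuousOn u (Set.Icc (0 : ℝ) T))
    (dfun : ℝ → Evec n) (hdfun : ContinuousOn dfun (Set.Icc (0 : ℝ) T))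
    (xr : ℝ → Evec r)
    (hxr : ∀ t ∈ Set.Icc (0 : ℝ) T, HasDerivAt xr
      (mv Dr (mv Qr (xr t) + mv Φᵀ (mv (Jh (mv Φ (xr t)))ᵀ (mv Pbbᵀ c))) + mv Br (u t)) t)
    (θ : ℝ → Evec n) (hθ : ∀ t, θ t = mv Φ (mv Φᵀ (x t)) - mv Φ (xr t))
    (ρ : ℝ → Evec n) (hρ : ∀ t, ρ t = x t - mv Φ (mv Φᵀ (x t)))
    (ζ : ℝ → Evec n) (hζ : ∀ t, ζ t = x' t - dfun t)
    (η : ℝ → Evec r)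
    (hη : ∀ t, η t = mv Φᵀ (dfun t) - mv Dr (mv Φᵀ (gH (x t))) - mv Br (u t))
    (ξ : ℝ → Matrix (Fin d) (Fin r) ℝ)
    (hξ : ∀ t, ξ t = (1 - Pbb) * Jh (mv Φ (mv Φᵀ (x t))) * Φ)
    (C₁ C₂ C₃ : ℝ)
    (hC₁ : C₁ = logNorm (Φ * Dr * Φᵀ * Q)
      + spec (Dr * Φᵀ) * CLipJ * spec ((Pᵀ * Ψ)⁻¹) * ‖c‖)
    (hC₂ : C₂ = spec (Dr * Φᵀ) * CLipH)
    (hC₃ : C₃ = spec Dr * ‖c‖) :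
    ∀ t ∈ Set.Icc (0 : ℝ) T, θ t ≠ 0 →
      ∃ D : ℝ, HasDerivAt (fun s => ‖θ s‖) D t ∧
        D ≤ C₁ * ‖θ t‖ + C₂ * ‖ρ t‖ + C₃ * spec (ξ t) + ‖ζ t‖ + ‖η t‖ := by
  intro t ht hθt
  have hxd := hx t ht
  have hxrd := hxr t ht
  set xh : Evec n := mv Φ (mv Φᵀ (x t)) with hxh
  set xrdval : Evec r :=
    mv Dr (mv Qr (xr t) + mv Φᵀ (mv (Jh (mv Φ (xr t)))ᵀ (mv Pbbᵀ c))) + mv Br (u t)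
      with hxrdval
  set θd : Evec n := mv (Φ * Φᵀ) (x' t) - mv Φ xrdval with hθd
  -- derivative of θ
  have hθfun : θ = fun s => mv (Φ * Φᵀ) (x s) - mv Φ (xr s) := by
    funext s; rw [hθ s, mv_mv]
  have hθderiv : HasDerivAt θ θd t := by
    rw [hθfun]
    exact (mv_hasDerivAt (Φ * Φᵀ) hxd).sub (mv_hasDerivAt Φ hxrd)
  -- basic positivity facts
  have hθpos : 0 < ‖θ t‖ := norm_pos_iff.2 hθt
  have hPP : Pᵀ * P = 1 := selection_orth P hP
  have hCJ : 0 ≤ CLipJ := by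
    have h1 := hLipJ (θ t) 0
    rw [sub_zero] at h1
    nlinarith [spec_nonneg (Jh (θ t) - Jh 0), hθpos]
  -- key algebraic decomposition of θd
  have hdecomp : θd = mv (Φ * Dr * Φᵀ * Q) (θ t)
      + mv (Φ * (Dr * Φᵀ)) (gH (x t) - gH xh)
      + mv (Φ * Dr) (mv (ξ t)ᵀ c)
      + mv (Φ * (Dr * Φᵀ)) (mv (Jh xh - Jh (mv Φ (xr t)))ᵀ (mv Pbbᵀ c))
      + mv (Φ * Φᵀ) (ζ t)
      + mv Φ (η t) := by
    rw [hθd, hxrdval, hxh]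
    simp only [hθ, hζ, hη, hξ, hgH, hQrdef, Matrix.transpose_mul, Matrix.transpose_sub,
      Matrix.transpose_one, mv_mv, mv_add, mv_sub, sub_mv, mv_one]
    abel
  -- bounds for the six terms
  have hρeq : x t - xh = ρ t := by rw [hρ t, hxh]
  have hθeq2 : xh - mv Φ (xr t) = θ t := by rw [hθ t, hxh]
  have hT1 : ⟪θ t, mv (Φ * Dr * Φᵀ * Q) (θ t)⟫ ≤
      logNorm (Φ * Dr * Φᵀ * Q) * (‖θ t‖ * ‖θ t‖) :=
    logNorm_bound _ _ hθt
  have hnormΦ : ∀ v : Evec r, ‖mv Φ v‖ = ‖v‖ := fun v => norm_mv_orth Φ hΦ v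
  have hT2 : ⟪θ t, mv (Φ * (Dr * Φᵀ)) (gH (x t) - gH xh)⟫ ≤
      ‖θ t‖ * (spec (Dr * Φᵀ) * (CLipH * ‖ρ t‖)) := by
    refine le_trans (real_inner_le_norm _ _) ?_
    apply mul_le_mul_of_nonneg_left _ (norm_nonneg _)
    rw [mv_mv, hnormΦ]
    refine le_trans (norm_mv_le _ _) ?_
    apply mul_le_mul_of_nonneg_left _ (spec_nonneg _)
    rw [← hρeq]
    exact hLipH (x t) xh
  have hT3 : ⟪θ t, mv (Φ * Dr) (mv (ξ t)ᵀ c)⟫ ≤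
      ‖θ t‖ * (spec Dr * (spec (ξ t) * ‖c‖)) := by
    refine le_trans (real_inner_le_norm _ _) ?_
    apply mul_le_mul_of_nonneg_left _ (norm_nonneg _)
    rw [mv_mv, hnormΦ]
    refine le_trans (norm_mv_le _ _) ?_
    apply mul_le_mul_of_nonneg_left _ (spec_nonneg _)
    refine le_trans (norm_mv_le _ _) ?_
    exact mul_le_mul_of_nonneg_right (spec_transpose_le _) (norm_nonneg c)
  have hPbbc : ‖mv Pbbᵀ c‖ ≤ spec ((Pᵀ * Ψ)⁻¹) * ‖c‖ := by
    have : Pbbᵀ = P * ((Pᵀ * Ψ)⁻¹)ᵀ * Ψᵀ := by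
      rw [hPbb]; simp [Matrix.transpose_mul, Matrix.mul_assoc]
    rw [this, mv_mv, mv_mv, norm_mv_orth P hPP]
    refine le_trans (norm_mv_le _ _) ?_
    refine le_trans (mul_le_mul_of_nonneg_right (spec_transpose_le _) (norm_nonneg _)) ?_
    apply mul_le_mul_of_nonneg_left _ (spec_nonneg _)
    refine le_trans (norm_mv_le _ _) ?_
    have h1 : spec Ψᵀ ≤ 1 := le_trans (spec_transpose_le Ψ) (spec_orth_le Ψ hΨ)
    nlinarith [norm_nonneg c, spec_nonneg (Ψᵀ)]
  have hT4 : ⟪θ t, mv (Φ * (Dr * Φᵀ)) (mv (Jh xh - Jh (mv Φ (xr t)))ᵀ (mv Pbbᵀ c))⟫ ≤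
      ‖θ t‖ * (spec (Dr * Φᵀ) * (CLipJ * ‖θ t‖ * (spec ((Pᵀ * Ψ)⁻¹) * ‖c‖))) := by
    refine le_trans (real_inner_le_norm _ _) ?_
    apply mul_le_mul_of_nonneg_left _ (norm_nonneg _)
    rw [mv_mv, hnormΦ]
    refine le_trans (norm_mv_le _ _) ?_
    apply mul_le_mul_of_nonneg_left _ (spec_nonneg _)
    have hJ : spec (Jh xh - Jh (mv Φ (xr t)))ᵀ ≤ CLipJ * ‖θ t‖ := by
      refine le_trans (spec_transpose_le _) ?_
      have := hLipJ xh (mv Φ (xr t))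
      rwa [hθeq2] at this
    calc ‖mv (Jh xh - Jh (mv Φ (xr t)))ᵀ (mv Pbbᵀ c)‖
        ≤ spec (Jh xh - Jh (mv Φ (xr t)))ᵀ * ‖mv Pbbᵀ c‖ := norm_mv_le _ _
      _ ≤ (CLipJ * ‖θ t‖) * (spec ((Pᵀ * Ψ)⁻¹) * ‖c‖) := by
          apply mul_le_mul hJ hPbbc (norm_nonneg _)
          positivity
      _ = CLipJ * ‖θ t‖ * (spec ((Pᵀ * Ψ)⁻¹) * ‖c‖) := rfl
  have hT5 : ⟪θ t, mv (Φ * Φᵀ) (ζ t)⟫ ≤ ‖θ t‖ * ‖ζ t‖ := by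
    refine le_trans (real_inner_le_norm _ _) ?_
    apply mul_le_mul_of_nonneg_left _ (norm_nonneg _)
    rw [mv_mv, hnormΦ]
    refine le_trans (norm_mv_le _ _) ?_
    have h1 : spec Φᵀ ≤ 1 := le_trans (spec_transpose_le Φ) (spec_orth_le Φ hΦ)
    nlinarith [norm_nonneg (ζ t), spec_nonneg (Φᵀ)]
  have hT6 : ⟪θ t, mv Φ (η t)⟫ ≤ ‖θ t‖ * ‖η t‖ := by
    refine le_trans (real_inner_le_norm _ _) ?_
    rw [hnormΦ]
  -- assemble
  refine ⟨⟪θ t, θd⟫ / ‖θ t‖, hasDerivAt_norm_comp hθderiv hθt, ?_⟩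
  rw [div_le_iff₀ hθpos]
  have hsum : ⟪θ t, θd⟫ ≤
      logNorm (Φ * Dr * Φᵀ * Q) * (‖θ t‖ * ‖θ t‖)
      + ‖θ t‖ * (spec (Dr * Φᵀ) * (CLipH * ‖ρ t‖))
      + ‖θ t‖ * (spec Dr * (spec (ξ t) * ‖c‖))
      + ‖θ t‖ * (spec (Dr * Φᵀ) * (CLipJ * ‖θ t‖ * (spec ((Pᵀ * Ψ)⁻¹) * ‖c‖)))
      + ‖θ t‖ * ‖ζ t‖ + ‖θ t‖ * ‖η t‖ := by
    rw [hdecomp]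
    simp only [inner_add_right]
    exact add_le_add (add_le_add (add_le_add (add_le_add (add_le_add hT1 hT2) hT3) hT4) hT5) hT6
  refine le_trans hsum (le_of_eq ?_)
  rw [hC₁, hC₂, hC₃]
  ring
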